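/- There exists a constant C > 0, depending only on a, M, the coefficients g_k and the angles θ_k, such that |W(r,θ)| ≤ C·r for all r > 0 and all θ ∈ ℝ. In particular the induced planar velocity field is bounded near the origin and has locally finite kinetic energy. -/

import Mathlib

/-- The complex constant `A := −2ai/(a+i)`. -/
noncomputable def Aconst (a : ℝ) : ℂ := -2 * (a : ℂ) * Complex.I / ((a : ℂ) + Complex.I)

/-- The self-similar velocity profile
`W(r,θ) := e^{iθ} Σ_{k} (2a g_k/(r(a−i))) · conj( exp((2a/(a+i)) ln r) · e^{A(θ_k−θ)} ·
e^{2πJ(r,θ,k)A}/(1−e^{2πA}) )`, where `J` is the winding-number function. -/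
noncomputable def Wprof (a : ℝ) (M : ℕ) (g θs : Fin M → ℝ)
    (J : ℝ → ℝ → Fin M → ℤ) (r θ : ℝ) : ℂ :=
  Complex.exp (Complex.I * (θ : ℂ)) * ∑ k : Fin M,
    (2 * (a : ℂ) * (g k : ℂ) / ((r : ℂ) * ((a : ℂ) - Complex.I))) *
      (starRingEnd ℂ)
        (Complex.exp ((2 * (a : ℂ) / ((a : ℂ) + Complex.I)) * (Real.log r : ℂ)) *
          Complex.exp (Aconst a * ((θs k : ℂ) - (θ : ℂ))) *
          (Complex.exp (2 * (Real.pi : ℂ) * (J r θ k : ℂ) * Aconst a) /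
            (1 - Complex.exp (2 * (Real.pi : ℂ) * Aconst a))))

/-- There exists a constant `C > 0` (depending only on `a`, `M`, the `g_k`
and the `θ_k`) such that `|W(r,θ)| ≤ C·r` for all `r > 0` and all `θ ∈ ℝ`. -/
theorem Wprof_linear_growth (a : ℝ) (ha : 0 < a) (M : ℕ) (hM : 1 ≤ M)
    (g θs : Fin M → ℝ) (J : ℝ → ℝ → Fin M → ℤ)
    (hJ : ∀ (r θ : ℝ) (k : Fin M), 0 < r →
      IsLeast {j : ℤ | 0 < a * (2 * Real.pi * (j : ℝ) + θs k - θ) + Real.log r} (J r θ k)) :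
    ∃ C : ℝ, 0 < C ∧ ∀ (r θ : ℝ), 0 < r →
      ‖Wprof a M g θs J r θ‖ ≤ C * r := by
  have ha2 : (0:ℝ) < a^2 + 1 := by positivity
  have hAre : (Aconst a).re = -(2*a)/(a^2+1) := by
    simp [Aconst, Complex.div_re, Complex.normSq_apply]; ring
  have hAreneg : (Aconst a).re < 0 := by
    rw [hAre]; apply div_neg_of_neg_of_pos _ ha2; linarith
  have hzre : ((2 * (a:ℂ) / ((a:ℂ) + Complex.I))).re = 2*a^2/(a^2+1) := by
    simp [Complex.div_re, Complex.normSq_apply]; ring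
  -- s := |a - I| > 0
  set s : ℝ := ‖(a:ℂ) - Complex.I‖ with hs_def
  have hs : 0 < s := by
    apply norm_pos_iff.mpr
    intro h
    have := congrArg Complex.im (sub_eq_zero.mp h)
    simp at this
  -- D := |1 - exp(2πA)| > 0
  set D : ℝ := ‖1 - Complex.exp (2 * (Real.pi : ℂ) * Aconst a)‖ with hD_def
  have hexpA : ‖Complex.exp (2 * (Real.pi : ℂ) * Aconst a)‖ < 1 := by
    rw [Complex.norm_exp]
    have : (2 * (Real.pi : ℂ) * Aconst a).re = 2 * Real.pi * (Aconst a).re := by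
      have h2 : (2 * (Real.pi : ℂ)) = ((2 * Real.pi : ℝ) : ℂ) := by push_cast; ring
      rw [h2, Complex.re_ofReal_mul]
    rw [this]
    rw [Real.exp_lt_one_iff]
    have : 0 < 2 * Real.pi := by positivity
    nlinarith
  have hD : 0 < D := by
    apply norm_pos_iff.mpr
    intro h
    rw [sub_eq_zero] at h
    rw [← h] at hexpA
    simp at hexpA
  refine ⟨(∑ k : Fin M, 2 * a * |g k| / (s * D)) + 1, by positivity, fun r θ hr => ?_⟩
  set L : ℝ := Real.log r with hL_def
  -- bound each summand
  have hterm : ∀ k : Fin M,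
      ‖(2 * (a : ℂ) * (g k : ℂ) / ((r : ℂ) * ((a : ℂ) - Complex.I))) *
        (starRingEnd ℂ)
          (Complex.exp ((2 * (a : ℂ) / ((a : ℂ) + Complex.I)) * (Real.log r : ℂ)) *
            Complex.exp (Aconst a * ((θs k : ℂ) - (θ : ℂ))) *
            (Complex.exp (2 * (Real.pi : ℂ) * (J r θ k : ℂ) * Aconst a) /
              (1 - Complex.exp (2 * (Real.pi : ℂ) * Aconst a))))‖
        ≤ (2 * a * |g k| / (s * D)) * r := by
    intro k
    have hJk := (hJ r θ k hr).1
    set j : ℤ := J r θ k with hj_def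
    set x : ℝ := 2 * Real.pi * (j : ℝ) + θs k - θ with hx_def
    have hx : 0 < a * x + L := hJk
    -- real parts of the three exponents
    have e1 : ((2 * (a:ℂ) / ((a:ℂ) + Complex.I)) * (Real.log r : ℂ)).re
        = 2*a^2/(a^2+1) * L := by
      rw [mul_comm, Complex.re_ofReal_mul, hzre]; ring
    have e2 : (Aconst a * ((θs k : ℂ) - (θ : ℂ))).re = (Aconst a).re * (θs k - θ) := by
      have : ((θs k : ℂ) - (θ : ℂ)) = ((θs k - θ : ℝ) : ℂ) := by push_cast; ring
      rw [this, mul_comm, Complex.re_ofReal_mul]; ring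
    have e3 : (2 * (Real.pi : ℂ) * (j : ℂ) * Aconst a).re
        = 2 * Real.pi * (j:ℝ) * (Aconst a).re := by
      have : (2 * (Real.pi : ℂ) * (j : ℂ)) = ((2 * Real.pi * (j:ℝ) : ℝ) : ℂ) := by
        push_cast; ring
      rw [this, Complex.re_ofReal_mul]
    -- key exponent bound
    have key : 2*a^2/(a^2+1) * L + (Aconst a).re * (θs k - θ)
        + 2 * Real.pi * (j:ℝ) * (Aconst a).re ≤ 2 * L := by
      rw [hAre]
      have h2 : -(2 * a * x) ≤ 2 * L := by nlinarith
      have heq : 2*a^2/(a^2+1) * L + -(2*a)/(a^2+1) * (θs k - θ)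
          + 2 * Real.pi * (j:ℝ) * (-(2*a)/(a^2+1))
          = (2*a^2 * L + -(2*a*x)) / (a^2+1) := by
        rw [hx_def]; field_simp; ring
      rw [heq]
      calc (2*a^2 * L + -(2*a*x)) / (a^2+1) ≤ (2*a^2 * L + 2*L) / (a^2+1) := by
            gcongr
        _ = 2 * L := by field_simp
    -- compute absolute value
    rw [norm_mul, Complex.norm_conj, norm_mul, norm_mul, norm_div, norm_div, norm_mul, norm_mul,
      norm_mul, Complex.norm_exp, Complex.norm_exp, Complex.norm_exp, Complex.norm_real,
      Complex.norm_real, Complex.norm_real, Real.norm_eq_abs, Real.norm_eq_abs, Real.norm_eq_abs,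
      Complex.norm_two, e1, e2, e3, ← hD_def, ← hs_def]
    have hra : |a| = a := abs_of_pos ha
    have hrr : |r| = r := abs_of_pos hr
    rw [hra, hrr]
    have hexps : Real.exp (2*a^2/(a^2+1) * L) * Real.exp ((Aconst a).re * (θs k - θ))
        * (Real.exp (2 * Real.pi * (j:ℝ) * (Aconst a).re) / D)
        = Real.exp (2*a^2/(a^2+1) * L + (Aconst a).re * (θs k - θ)
            + 2 * Real.pi * (j:ℝ) * (Aconst a).re) / D := by
      rw [← Real.exp_add, ← mul_div_assoc, ← Real.exp_add]
    rw [hexps]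
    have hexp_le : Real.exp (2*a^2/(a^2+1) * L + (Aconst a).re * (θs k - θ)
        + 2 * Real.pi * (j:ℝ) * (Aconst a).re) ≤ r^2 := by
      calc _ ≤ Real.exp (2 * L) := Real.exp_le_exp.mpr key
        _ = r ^ 2 := by
            rw [hL_def, two_mul, Real.exp_add, Real.exp_log hr]; ring
    calc 2 * a * |g k| / (r * s) * (Real.exp _ / D)
        ≤ 2 * a * |g k| / (r * s) * (r^2 / D) := by gcongr
      _ = (2 * a * |g k| / (s * D)) * r := by field_simp
  -- assemble
  rw [Wprof, norm_mul, Complex.norm_exp]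
  have : (Complex.I * (θ:ℂ)).re = 0 := by simp
  rw [this, Real.exp_zero, one_mul]
  calc ‖∑ k : Fin M, _‖ ≤ ∑ k : Fin M, _ := norm_sum_le _ _
    _ ≤ ∑ k : Fin M, (2 * a * |g k| / (s * D)) * r := Finset.sum_le_sum fun k _ => hterm k
    _ = (∑ k : Fin M, 2 * a * |g k| / (s * D)) * r := by rw [Finset.sum_mul]
    _ ≤ ((∑ k : Fin M, 2 * a * |g k| / (s * D)) + 1) * r := by nlinarith
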